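/- For every f ∈ L^∞([1,∞)), the two sublinear functionals P̄ and Q̄ coincide: lim_{θ→1⁺} limsup_{x→∞} (1/(θx−x))∫ₓ^{θx} f(t)dt = lim_{θ→1⁺} limsup_{x→∞} (1/log θ)∫ₓ^{θx} f(t)·(dt/t). -/

import Mathlib

open Filter MeasureTheory Set Topology

/-- The inner limsup defining `P̄`. -/
noncomputable def innerP (f : ℝ → ℝ) (θ : ℝ) : ℝ :=
  Filter.limsup (fun x : ℝ => (∫ t in x..(θ * x), f t) / (θ * x - x)) Filter.atTop

/-- The inner limsup defining `Q̄`. -/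
noncomputable def innerQ (f : ℝ → ℝ) (θ : ℝ) : ℝ :=
  Filter.limsup (fun x : ℝ => (∫ t in x..(θ * x), f t / t) / Real.log θ) Filter.atTop

noncomputable def Faux (f : ℝ → ℝ) (θ : ℝ) : ℝ :=
  Filter.limsup (fun x : ℝ => ∫ t in x..(θ * x), f t / t) Filter.atTop

section PQaux
variable {f : ℝ → ℝ} {C : ℝ}

lemma myIntble (hm : Measurable f) (hb : ∀ x ≥ (1:ℝ), |f x| ≤ C)
    {a b : ℝ} (ha : 1 ≤ a) (hab : a ≤ b) :
    IntervalIntegrable (fun t => f t / t) volume a b := by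
  rw [intervalIntegrable_iff_integrableOn_Ioc_of_le hab]
  apply Integrable.mono' (integrable_const C)
    ((hm.div measurable_id).aestronglyMeasurable)
  filter_upwards [ae_restrict_mem measurableSet_Ioc] with t ht
  have ht1 : (1:ℝ) ≤ t := ha.trans ht.1.le
  have : |f t / t| ≤ C := by
    rw [abs_div]
    calc |f t| / |t| ≤ |f t| := div_le_self (abs_nonneg _) (le_abs.2 (Or.inl ht1))
      _ ≤ C := hb t ht1
  rw [Real.norm_eq_abs]; exact this

lemma myIntble' (hm : Measurable f) (hb : ∀ x ≥ (1:ℝ), |f x| ≤ C)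
    {a b : ℝ} (ha : 1 ≤ a) (hab : a ≤ b) :
    IntervalIntegrable f volume a b := by
  rw [intervalIntegrable_iff_integrableOn_Ioc_of_le hab]
  apply Integrable.mono' (integrable_const C) hm.aestronglyMeasurable
  filter_upwards [ae_restrict_mem measurableSet_Ioc] with t ht
  simpa using hb t (ha.trans ht.1.le)

-- |∫ f/t| ≤ C log(b/a)
lemma myBoundQ (hm : Measurable f) (hb : ∀ x ≥ (1:ℝ), |f x| ≤ C)
    {a b : ℝ} (ha : 1 ≤ a) (hab : a ≤ b) :
    |∫ t in a..b, f t / t| ≤ C * Real.log (b / a) := by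
  have h0a : 0 < a := lt_of_lt_of_le one_pos ha
  have hCt : IntervalIntegrable (fun t => C / t) volume a b := by
    apply ContinuousOn.intervalIntegrable
    apply continuousOn_const.div continuousOn_id
    intro t ht
    rw [uIcc_of_le hab] at ht
    exact ne_of_gt (h0a.trans_le ht.1)
  calc |∫ t in a..b, f t / t| ≤ ∫ t in a..b, |f t / t| :=
        intervalIntegral.abs_integral_le_integral_abs hab
    _ ≤ ∫ t in a..b, C / t := by
        apply intervalIntegral.integral_mono_on hab
          ((myIntble hm hb ha hab).abs) hCt
        intro t ht
        have ht1 : (1:ℝ) ≤ t := ha.trans ht.1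
        have htpos : 0 < t := lt_of_lt_of_le one_pos ht1
        rw [abs_div, abs_of_pos htpos, div_le_div_iff_of_pos_right htpos]
        exact hb t ht1
    _ = C * Real.log (b / a) := by
        simp_rw [div_eq_mul_inv C, ← one_div]
        rw [intervalIntegral.integral_const_mul, integral_one_div]
        intro hmem
        rw [uIcc_of_le hab] at hmem
        linarith [hmem.1]

lemma pointQ (hm : Measurable f) (hb : ∀ x ≥ (1:ℝ), |f x| ≤ C) {θ a : ℝ}
    (hθ : 1 ≤ θ) (ha : 1 ≤ a) :
    |∫ t in a..(θ * a), f t / t| ≤ C * Real.log θ := by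
  have ha0 : (0:ℝ) < a := lt_of_lt_of_le one_pos ha
  have h := myBoundQ hm hb ha (le_mul_of_one_le_left ha0.le hθ)
  rwa [mul_div_assoc, div_self ha0.ne', mul_one] at h

lemma Faux_ev (hm : Measurable f) (hb : ∀ x ≥ (1:ℝ), |f x| ≤ C) {θ : ℝ} (hθ : 1 ≤ θ) :
    ∀ᶠ x : ℝ in atTop, |∫ t in x..(θ * x), f t / t| ≤ C * Real.log θ := by
  filter_upwards [eventually_ge_atTop (1:ℝ)] with x hx
  exact pointQ hm hb hθ hx

lemma Faux_bddAbove (hm : Measurable f) (hb : ∀ x ≥ (1:ℝ), |f x| ≤ C) {θ : ℝ} (hθ : 1 ≤ θ) :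
    IsBoundedUnder (· ≤ ·) atTop (fun x : ℝ => ∫ t in x..(θ * x), f t / t) :=
  isBoundedUnder_of_eventually_le ((Faux_ev hm hb hθ).mono fun x hx => (abs_le.1 hx).2)

lemma Faux_bddBelow (hm : Measurable f) (hb : ∀ x ≥ (1:ℝ), |f x| ≤ C) {θ : ℝ} (hθ : 1 ≤ θ) :
    IsBoundedUnder (· ≥ ·) atTop (fun x : ℝ => ∫ t in x..(θ * x), f t / t) :=
  isBoundedUnder_of_eventually_ge ((Faux_ev hm hb hθ).mono fun x hx => (abs_le.1 hx).1)

lemma Faux_le (hm : Measurable f) (hb : ∀ x ≥ (1:ℝ), |f x| ≤ C) {θ : ℝ} (hθ : 1 ≤ θ) :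
    Faux f θ ≤ C * Real.log θ :=
  limsup_le_of_le (Faux_bddBelow hm hb hθ).isCoboundedUnder_le
    ((Faux_ev hm hb hθ).mono fun x hx => (abs_le.1 hx).2)

lemma le_Faux (hm : Measurable f) (hb : ∀ x ≥ (1:ℝ), |f x| ≤ C) {θ : ℝ} (hθ : 1 ≤ θ) :
    -(C * Real.log θ) ≤ Faux f θ :=
  le_limsup_of_frequently_le
    (((Faux_ev hm hb hθ).mono fun x hx => (abs_le.1 hx).1).frequently)
    (Faux_bddAbove hm hb hθ)

lemma abs_Faux_le (hm : Measurable f) (hb : ∀ x ≥ (1:ℝ), |f x| ≤ C) {θ : ℝ} (hθ : 1 ≤ θ) :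
    |Faux f θ| ≤ C * Real.log θ :=
  abs_le.2 ⟨le_Faux hm hb hθ, Faux_le hm hb hθ⟩

lemma map_const_mul_atTop {θ : ℝ} (hθ : 0 < θ) :
    Filter.map (fun x : ℝ => θ * x) Filter.atTop = Filter.atTop := by
  have h1 : Tendsto (fun x : ℝ => θ * x) atTop atTop :=
    Tendsto.const_mul_atTop hθ tendsto_id
  have h2 : Tendsto (fun x : ℝ => θ⁻¹ * x) atTop atTop :=
    Tendsto.const_mul_atTop (by positivity) tendsto_id
  refine le_antisymm h1 ?_
  calc atTop = Filter.map ((fun x : ℝ => θ * x) ∘ (fun x : ℝ => θ⁻¹ * x)) atTop := by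
        have : ((fun x : ℝ => θ * x) ∘ (fun x : ℝ => θ⁻¹ * x)) = id := by
          funext x; simp [Function.comp, ← mul_assoc, mul_inv_cancel₀ hθ.ne']
        rw [this, Filter.map_id]
    _ = Filter.map (fun x : ℝ => θ * x) (Filter.map (fun x : ℝ => θ⁻¹ * x) atTop) :=
        (Filter.map_map).symm
    _ ≤ Filter.map (fun x : ℝ => θ * x) atTop := Filter.map_mono h2

lemma limsup_comp_const_mul (g : ℝ → ℝ) {θ : ℝ} (hθ : 0 < θ) :
    Filter.limsup (fun x => g (θ * x)) Filter.atTop = Filter.limsup g Filter.atTop := by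
  rw [show (fun x => g (θ * x)) = g ∘ (fun x : ℝ => θ * x) from rfl,
    Filter.limsup, Filter.limsup, ← Filter.map_map, map_const_mul_atTop hθ]

lemma Faux_subadd (hm : Measurable f) (hb : ∀ x ≥ (1:ℝ), |f x| ≤ C)
    {θ₁ θ₂ : ℝ} (h1 : 1 ≤ θ₁) (h2 : 1 ≤ θ₂) :
    Faux f (θ₁ * θ₂) ≤ Faux f θ₁ + Faux f θ₂ := by
  have key : ∀ᶠ x : ℝ in atTop,
      (∫ t in x..(θ₁ * θ₂ * x), f t / t)
        = ((fun x => ∫ t in x..(θ₁ * x), f t / t)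
            + (fun x => (fun y => ∫ t in y..(θ₂ * y), f t / t) (θ₁ * x))) x := by
    filter_upwards [eventually_ge_atTop (1:ℝ)] with x hx
    have hx0 : (0:ℝ) < x := lt_of_lt_of_le one_pos hx
    have hxa : x ≤ θ₁ * x := le_mul_of_one_le_left hx0.le h1
    have hx1 : (1:ℝ) ≤ θ₁ * x := hx.trans hxa
    have hab : θ₁ * x ≤ θ₂ * (θ₁ * x) :=
      le_mul_of_one_le_left (by linarith) h2
    have e1 := intervalIntegral.integral_add_adjacent_intervals
      (myIntble hm hb hx hxa) (myIntble hm hb hx1 hab)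
    simp only [Pi.add_apply]
    rw [show θ₁ * θ₂ * x = θ₂ * (θ₁ * x) by ring, ← e1]
  calc Faux f (θ₁ * θ₂)
      = Filter.limsup ((fun x => ∫ t in x..(θ₁ * x), f t / t)
          + (fun x => (fun y => ∫ t in y..(θ₂ * y), f t / t) (θ₁ * x))) atTop :=
        limsup_congr key
    _ ≤ Filter.limsup (fun x => ∫ t in x..(θ₁ * x), f t / t) atTop
        + Filter.limsup (fun x => (fun y => ∫ t in y..(θ₂ * y), f t / t) (θ₁ * x)) atTop := by
        have hcomp : ∀ᶠ x : ℝ in atTop,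
            |(fun y => ∫ t in y..(θ₂ * y), f t / t) (θ₁ * x)| ≤ C * Real.log θ₂ := by
          filter_upwards [eventually_ge_atTop (1:ℝ)] with x hx
          exact pointQ hm hb h2 (hx.trans (le_mul_of_one_le_left (by linarith) h1))
        exact limsup_add_le (Faux_bddBelow hm hb h1) (Faux_bddAbove hm hb h1)
          ((isBoundedUnder_of_eventually_ge
            (hcomp.mono fun x hx => (abs_le.1 hx).1)).isCoboundedUnder_le)
          (isBoundedUnder_of_eventually_le
            (hcomp.mono fun x hx => (abs_le.1 hx).2))
    _ = Faux f θ₁ + Faux f θ₂ := by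
        rw [limsup_comp_const_mul (fun y => ∫ t in y..(θ₂ * y), f t / t)
          (lt_of_lt_of_le one_pos h1)]
        rfl

lemma Faux_one : Faux f 1 = 0 := by
  have : (fun x : ℝ => ∫ t in x..((1:ℝ) * x), f t / t) = fun _ => (0:ℝ) := by
    funext x; rw [one_mul, intervalIntegral.integral_same]
  rw [Faux, this, limsup_const]

lemma Faux_pow (hm : Measurable f) (hb : ∀ x ≥ (1:ℝ), |f x| ≤ C)
    {θ : ℝ} (hθ : 1 ≤ θ) (n : ℕ) :
    Faux f (θ ^ n) ≤ n * Faux f θ := by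
  induction n with
  | zero => simp [Faux_one]
  | succ n ih =>
      have h1 : (1:ℝ) ≤ θ ^ n := one_le_pow₀ hθ
      calc Faux f (θ ^ (n + 1)) = Faux f (θ ^ n * θ) := by rw [pow_succ]
        _ ≤ Faux f (θ ^ n) + Faux f θ := Faux_subadd hm hb h1 hθ
        _ ≤ n * Faux f θ + Faux f θ := by linarith
        _ = (n + 1 : ℕ) * Faux f θ := by push_cast; ring

lemma Gq_key (hm : Measurable f) (hb : ∀ x ≥ (1:ℝ), |f x| ≤ C) (hC : 0 ≤ C)
    {a θ : ℝ} (ha : 1 < a) (hθ : 1 < θ) (hθa : θ ≤ a) :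
    Faux f a / Real.log a ≤ Faux f θ / Real.log θ + 2 * C * (Real.log θ / Real.log a) := by
  have hθ0 : (0:ℝ) < θ := by linarith
  have hlθ : 0 < Real.log θ := Real.log_pos hθ
  have hla : 0 < Real.log a := Real.log_pos ha
  set lθ := Real.log θ with hlθdef
  set la := Real.log a with hladef
  set q : ℝ := la / lθ with hq
  have hq1 : 1 ≤ q := (one_le_div hlθ).2 (Real.log_le_log hθ0 hθa)
  set n : ℕ := ⌊q⌋₊ with hn
  have hnq : (n:ℝ) ≤ q := Nat.floor_le (by positivity)
  have hqn : q < n + 1 := Nat.lt_floor_add_one q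
  have hn1 : (1:ℝ) ≤ (n:ℝ) := by
    have : (1:ℕ) ≤ n := Nat.le_floor (by exact_mod_cast hq1)
    exact_mod_cast this
  have hθn0 : (0:ℝ) < θ ^ n := pow_pos hθ0 n
  have hθn1 : (1:ℝ) ≤ θ ^ n := one_le_pow₀ hθ.le
  have hlogpow : Real.log (θ ^ n) = n * lθ := by rw [hlθdef, Real.log_pow]
  have hqla : q * lθ = la := by rw [hq]; field_simp
  have hθna : θ ^ n ≤ a := by
    rw [← Real.log_le_log_iff hθn0 (by linarith), hlogpow]
    calc (n:ℝ) * lθ ≤ q * lθ := by nlinarith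
      _ = la := hqla
  have haθn : a ≤ θ ^ n * θ := by
    rw [← Real.log_le_log_iff (by linarith) (by positivity), Real.log_mul (by positivity) hθ0.ne',
      hlogpow, ← hladef, ← hlθdef]
    nlinarith [hqla]
  set r : ℝ := a / θ ^ n with hr
  have hr1 : 1 ≤ r := (one_le_div hθn0).2 hθna
  have hrθ : r ≤ θ := (div_le_iff₀ hθn0).2 (by linarith [haθn])
  have hra : θ ^ n * r = a := by rw [hr]; field_simp
  have hlogr : Real.log r ≤ lθ := Real.log_le_log (by linarith) hrθ
  have hFa : Faux f a ≤ n * Faux f θ + C * lθ := by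
    calc Faux f a = Faux f (θ ^ n * r) := by rw [hra]
      _ ≤ Faux f (θ ^ n) + Faux f r := Faux_subadd hm hb hθn1 hr1
      _ ≤ n * Faux f θ + C * Real.log r := by
          have := Faux_pow hm hb hθ.le n
          have := Faux_le hm hb hr1
          linarith
      _ ≤ n * Faux f θ + C * lθ := by nlinarith
  have habs := abs_Faux_le hm hb hθ.le
  have h2 : (n:ℝ) * Faux f θ ≤ q * Faux f θ + C * lθ := by
    rcases le_or_gt 0 (Faux f θ) with h | h
    · nlinarith
    · nlinarith [(abs_le.1 habs).1]
  have h3 : Faux f a ≤ q * Faux f θ + 2 * C * lθ := by linarith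
  calc Faux f a / la ≤ (q * Faux f θ + 2 * C * lθ) / la :=
        by gcongr
    _ = Faux f θ / lθ + 2 * C * (lθ / la) := by
        rw [hq]; field_simp

lemma abs_Gq_le (hm : Measurable f) (hb : ∀ x ≥ (1:ℝ), |f x| ≤ C)
    {θ : ℝ} (hθ : 1 < θ) : |Faux f θ / Real.log θ| ≤ C := by
  have hlθ : 0 < Real.log θ := Real.log_pos hθ
  rw [abs_div, abs_of_pos hlθ, div_le_iff₀ hlθ]
  exact abs_Faux_le hm hb hθ.le

lemma tendsto_Gq (hm : Measurable f) (hb : ∀ x ≥ (1:ℝ), |f x| ≤ C) (hC : 0 ≤ C) :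
    Tendsto (fun θ => Faux f θ / Real.log θ) (𝓝[>] (1:ℝ))
      (𝓝 (sSup ((fun θ => Faux f θ / Real.log θ) '' Ioi 1))) := by
  set G := fun θ => Faux f θ / Real.log θ with hG
  set L := sSup (G '' Ioi 1) with hL
  have hbA : BddAbove (G '' Ioi 1) := by
    refine ⟨C, ?_⟩
    rintro y ⟨θ, hθ, rfl⟩
    exact (abs_le.1 (abs_Gq_le hm hb hθ)).2
  have hne : (G '' Ioi (1:ℝ)).Nonempty := ⟨G 2, ⟨2, by norm_num, rfl⟩⟩
  have hGle : ∀ θ : ℝ, 1 < θ → G θ ≤ L := fun θ hθ => le_csSup hbA ⟨θ, hθ, rfl⟩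
  rw [Metric.tendsto_nhds]
  intro ε hε
  obtain ⟨y, ⟨a, ha, rfl⟩, hya⟩ :=
    exists_lt_of_lt_csSup hne (show L - ε/2 < L by linarith)
  have hlog0 : Tendsto Real.log (𝓝 (1:ℝ)) (𝓝 0) := by
    have := (Real.continuousAt_log (one_ne_zero)).tendsto
    simpa using this
  have E3 : Tendsto (fun θ : ℝ => 2 * C * (Real.log θ / Real.log a)) (𝓝[>] (1:ℝ)) (𝓝 0) := by
    have : Tendsto (fun θ : ℝ => 2 * C * (Real.log θ / Real.log a)) (𝓝 (1:ℝ))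
        (𝓝 (2 * C * (0 / Real.log a))) := (hlog0.div_const _).const_mul _
    simpa using this.mono_left nhdsWithin_le_nhds
  have E3' : ∀ᶠ θ : ℝ in 𝓝[>] (1:ℝ), 2 * C * (Real.log θ / Real.log a) < ε/2 := by
    have := E3.eventually (eventually_lt_nhds (show (0:ℝ) < ε/2 by linarith))
    exact this
  have E2 : ∀ᶠ θ : ℝ in 𝓝[>] (1:ℝ), θ < a :=
    mem_nhdsWithin_of_mem_nhds (Iio_mem_nhds (mem_Ioi.1 ha))
  filter_upwards [E2, E3', self_mem_nhdsWithin] with θ hθa hθε (hθ1 : 1 < θ)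
  have hkey := Gq_key hm hb hC (mem_Ioi.1 ha) hθ1 hθa.le
  have h1 : G θ ≤ L := hGle θ hθ1
  have h2 : L - ε < G θ := by
    have : G a ≤ G θ + 2 * C * (Real.log θ / Real.log a) := hkey
    linarith
  rw [Real.dist_eq, abs_sub_lt_iff]
  constructor <;> linarith

lemma innerQ_eq (hm : Measurable f) (hb : ∀ x ≥ (1:ℝ), |f x| ≤ C)
    {θ : ℝ} (hθ : 1 < θ) : innerQ f θ = Faux f θ / Real.log θ := by
  have hlθ : 0 < Real.log θ := Real.log_pos hθ
  have h := Monotone.map_limsup_of_continuousAt (F := atTop)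
    (f := fun y : ℝ => y / Real.log θ) (monotone_id.div_const hlθ.le)
    (fun x : ℝ => ∫ t in x..(θ * x), f t / t)
    ((continuous_id.div_const _).continuousAt)
    (Faux_bddAbove hm hb hθ.le) ((Faux_bddBelow hm hb hθ.le).isCoboundedUnder_le)
  exact h.symm

lemma PQ_diff (hm : Measurable f) (hb : ∀ x ≥ (1:ℝ), |f x| ≤ C)
    {θ : ℝ} (hθ : 1 < θ) :
    ∀ᶠ x : ℝ in atTop,
      |(∫ t in x..(θ * x), f t) / (θ * x - x) - (∫ t in x..(θ * x), f t / t) / Real.log θ|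
        ≤ C * |Real.log θ / (θ - 1) - 1| + C * (θ - 1) := by
  have hd : (0:ℝ) < θ - 1 := by linarith
  have hlθ : 0 < Real.log θ := Real.log_pos hθ
  filter_upwards [eventually_ge_atTop (1:ℝ)] with x hx
  have hx0 : (0:ℝ) < x := by linarith
  have hxθ : x ≤ θ * x := le_mul_of_one_le_left hx0.le hθ.le
  set I := ∫ t in x..(θ * x), f t with hI
  set J := ∫ t in x..(θ * x), f t / t with hJ
  -- E = J - I/x as an integral
  have hIx : (∫ t in x..(θ * x), f t / x) = I / x := intervalIntegral.integral_div x f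
  have hEint : J - I / x = ∫ t in x..(θ * x), (f t / t - f t / x) := by
    rw [intervalIntegral.integral_sub (myIntble hm hb hx hxθ)
      ((myIntble' hm hb hx hxθ).div_const x), hIx]
  have hE : |J - I / x| ≤ C * (θ - 1) * (θ - 1) := by
    rw [hEint]
    have hbound : ∀ t ∈ Set.uIoc x (θ * x), ‖f t / t - f t / x‖ ≤ C * (θ - 1) / x := by
      intro t ht
      rw [uIoc_of_le hxθ] at ht
      have ht1 : (1:ℝ) ≤ t := hx.trans ht.1.le
      have ht0 : 0 < t := by linarith
      have hcx : 0 ≤ C := le_trans (abs_nonneg _) (hb 1 le_rfl)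
      have hfe : f t / t - f t / x = f t * (1 / t - 1 / x) := by ring
      rw [Real.norm_eq_abs, hfe, abs_mul]
      have h1 : |1 / t - 1 / x| = (t - x) / (t * x) := by
        rw [abs_sub_comm, abs_of_nonneg]
        · rw [div_sub_div _ _ hx0.ne' ht0.ne']
          congr 1
          · ring
          · ring
        · have : 1 / t ≤ 1 / x := one_div_le_one_div_of_le hx0 ht.1.le
          linarith
      rw [h1]
      have h2 : (t - x) / (t * x) ≤ ((θ - 1) * x) / (x * x) :=
        div_le_div₀ (by nlinarith) (by nlinarith [ht.2]) (mul_pos hx0 hx0)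
          (by nlinarith [ht.1.le])
      have h3 : ((θ - 1) * x) / (x * x) = (θ - 1) / x := by
        field_simp
      calc |f t| * ((t - x) / (t * x)) ≤ C * ((θ - 1) / x) := by
            apply mul_le_mul (hb t ht1) (h3 ▸ h2) (by apply div_nonneg <;> nlinarith [ht.1.le]) hcx
        _ = C * (θ - 1) / x := by ring
    have := intervalIntegral.norm_integral_le_of_norm_le_const hbound
    rw [Real.norm_eq_abs] at this
    calc |∫ t in x..(θ * x), (f t / t - f t / x)| ≤ C * (θ - 1) / x * |θ * x - x| := this
      _ = C * (θ - 1) * (θ - 1) := by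
          rw [abs_of_nonneg (by nlinarith)]
          field_simp
  have hid : I / (θ * x - x) - J / Real.log θ
      = (J / Real.log θ) * (Real.log θ / (θ - 1) - 1) - (J - I / x) / (θ - 1) := by
    rw [show θ * x - x = (θ - 1) * x by ring]
    field_simp
    ring
  have hJb : |J / Real.log θ| ≤ C := by
    rw [abs_div, abs_of_pos hlθ, div_le_iff₀ hlθ]
    exact pointQ hm hb hθ.le hx
  calc |I / (θ * x - x) - J / Real.log θ|
      = |(J / Real.log θ) * (Real.log θ / (θ - 1) - 1) - (J - I / x) / (θ - 1)| := by rw [hid]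
    _ ≤ |(J / Real.log θ) * (Real.log θ / (θ - 1) - 1)| + |(J - I / x) / (θ - 1)| :=
        abs_sub _ _
    _ ≤ C * |Real.log θ / (θ - 1) - 1| + C * (θ - 1) := by
        have t1 : |(J / Real.log θ) * (Real.log θ / (θ - 1) - 1)|
            ≤ C * |Real.log θ / (θ - 1) - 1| := by
          rw [abs_mul]
          exact mul_le_mul_of_nonneg_right hJb (abs_nonneg _)
        have t2 : |(J - I / x) / (θ - 1)| ≤ C * (θ - 1) := by
          rw [abs_div, abs_of_pos hd, div_le_iff₀ hd]
          calc |J - I / x| ≤ C * (θ - 1) * (θ - 1) := hE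
            _ = C * (θ - 1) * (θ - 1) := rfl
        linarith

lemma Qint_ev (hm : Measurable f) (hb : ∀ x ≥ (1:ℝ), |f x| ≤ C) {θ : ℝ} (hθ : 1 < θ) :
    ∀ᶠ x : ℝ in atTop, |(∫ t in x..(θ * x), f t / t) / Real.log θ| ≤ C := by
  have hlθ : 0 < Real.log θ := Real.log_pos hθ
  filter_upwards [eventually_ge_atTop (1:ℝ)] with x hx
  rw [abs_div, abs_of_pos hlθ, div_le_iff₀ hlθ]
  exact pointQ hm hb hθ.le hx

lemma innerP_close (hm : Measurable f) (hb : ∀ x ≥ (1:ℝ), |f x| ≤ C)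
    {θ : ℝ} (hθ : 1 < θ) :
    |innerP f θ - innerQ f θ| ≤ C * |Real.log θ / (θ - 1) - 1| + C * (θ - 1) := by
  set δ := C * |Real.log θ / (θ - 1) - 1| + C * (θ - 1) with hδ
  set u := fun x : ℝ => (∫ t in x..(θ * x), f t) / (θ * x - x) with hu
  set v := fun x : ℝ => (∫ t in x..(θ * x), f t / t) / Real.log θ with hv
  have hdiff : ∀ᶠ x : ℝ in atTop, |u x - v x| ≤ δ := PQ_diff hm hb hθ
  have hvb : ∀ᶠ x : ℝ in atTop, |v x| ≤ C := Qint_ev hm hb hθ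
  have hub : ∀ᶠ x : ℝ in atTop, |u x| ≤ C + δ := by
    filter_upwards [hdiff, hvb] with x h1 h2
    have h3 := abs_sub_abs_le_abs_sub (u x) (v x)
    linarith
  have hvA : IsBoundedUnder (· ≤ ·) atTop v :=
    isBoundedUnder_of_eventually_le (hvb.mono fun x h => (abs_le.1 h).2)
  have hvB : IsBoundedUnder (· ≥ ·) atTop v :=
    isBoundedUnder_of_eventually_ge (hvb.mono fun x h => (abs_le.1 h).1)
  have huA : IsBoundedUnder (· ≤ ·) atTop u :=
    isBoundedUnder_of_eventually_le (hub.mono fun x h => (abs_le.1 h).2)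
  have huB : IsBoundedUnder (· ≥ ·) atTop u :=
    isBoundedUnder_of_eventually_ge (hub.mono fun x h => (abs_le.1 h).1)
  have h1 : innerP f θ ≤ innerQ f θ + δ := by
    calc innerP f θ ≤ limsup (fun x => v x + δ) atTop := by
          apply limsup_le_limsup (hdiff.mono fun x h => by linarith [(abs_le.1 h).2])
            huB.isCoboundedUnder_le
            (isBoundedUnder_of_eventually_le (a := C + δ)
              (hvb.mono fun x h => by linarith [(abs_le.1 h).2]))
      _ = innerQ f θ + δ := limsup_add_const atTop v δ hvA hvB.isCoboundedUnder_le
  have h2 : innerQ f θ ≤ innerP f θ + δ := by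
    calc innerQ f θ ≤ limsup (fun x => u x + δ) atTop := by
          apply limsup_le_limsup (hdiff.mono fun x h => by linarith [(abs_le.1 h).1])
            hvB.isCoboundedUnder_le
            (isBoundedUnder_of_eventually_le (a := C + δ + δ)
              (hub.mono fun x h => by linarith [(abs_le.1 h).2]))
      _ = innerP f θ + δ := limsup_add_const atTop u δ huA huB.isCoboundedUnder_le
  exact abs_le.2 ⟨by linarith, by linarith⟩

lemma tendsto_delta {C : ℝ} :
    Tendsto (fun θ : ℝ => C * |Real.log θ / (θ - 1) - 1| + C * (θ - 1))
      (𝓝[>] (1:ℝ)) (𝓝 0) := by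
  have hslope : Tendsto (fun θ : ℝ => Real.log θ / (θ - 1)) (𝓝[>] (1:ℝ)) (𝓝 1) := by
    have h := hasDerivAt_iff_tendsto_slope.1 (Real.hasDerivAt_log one_ne_zero)
    have h2 : Tendsto (slope Real.log 1) (𝓝[>] (1:ℝ)) (𝓝 1) := by
      simpa using h.mono_left (nhdsWithin_mono 1 (fun x (hx : x ∈ Ioi (1:ℝ)) => ne_of_gt hx))
    apply h2.congr
    intro θ
    rw [slope_def_field, Real.log_one, sub_zero]
    -- slope_def_field : slope f a b = (f b - f a)/(b - a)?
  have t1 : Tendsto (fun θ : ℝ => C * |Real.log θ / (θ - 1) - 1|) (𝓝[>] (1:ℝ)) (𝓝 0) := by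
    have := ((hslope.sub_const 1).abs).const_mul C
    simpa using this
  have t2 : Tendsto (fun θ : ℝ => C * (θ - 1)) (𝓝[>] (1:ℝ)) (𝓝 0) := by
    have : Tendsto (fun θ : ℝ => C * (θ - 1)) (𝓝 (1:ℝ)) (𝓝 (C * (1 - 1))) :=
      ((continuous_const.mul (continuous_id.sub continuous_const))).continuousAt
    simpa using this.mono_left nhdsWithin_le_nhds
  simpa using t1.add t2

end PQaux

/-- For every `f ∈ L^∞([1,∞))`, the sublinear functionals `P̄` and `Q̄` coincide. -/
theorem Pbar_eq_Qbar (f : ℝ → ℝ) (C : ℝ)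
    (hm : Measurable f) (hb : ∀ x ≥ (1 : ℝ), |f x| ≤ C) :
    ∃ L : ℝ, Tendsto (innerP f) (𝓝[>] (1 : ℝ)) (𝓝 L) ∧
      Tendsto (innerQ f) (𝓝[>] (1 : ℝ)) (𝓝 L) := by
  have hC : 0 ≤ C := le_trans (abs_nonneg _) (hb 1 le_rfl)
  set L := sSup ((fun θ => Faux f θ / Real.log θ) '' Ioi 1) with hLdef
  have hQt : Tendsto (innerQ f) (𝓝[>] (1 : ℝ)) (𝓝 L) := by
    apply Tendsto.congr' _ (tendsto_Gq hm hb hC)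
    exact eventually_mem_nhdsWithin.mono fun θ hθ => (innerQ_eq hm hb hθ).symm
  refine ⟨L, ?_, hQt⟩
  have hδ : Tendsto (fun θ : ℝ => C * |Real.log θ / (θ - 1) - 1| + C * (θ - 1))
      (𝓝[>] (1:ℝ)) (𝓝 0) := tendsto_delta
  apply tendsto_of_tendsto_of_tendsto_of_le_of_le'
    (g := fun θ : ℝ => innerQ f θ - (C * |Real.log θ / (θ - 1) - 1| + C * (θ - 1)))
    (h := fun θ : ℝ => innerQ f θ + (C * |Real.log θ / (θ - 1) - 1| + C * (θ - 1)))
  · simpa using hQt.sub hδ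
  · simpa using hQt.add hδ
  · exact eventually_mem_nhdsWithin.mono fun θ hθ => by
      have := abs_le.1 (innerP_close hm hb hθ)
      linarith [this.1]
  · exact eventually_mem_nhdsWithin.mono fun θ hθ => by
      have := abs_le.1 (innerP_close hm hb hθ)
      linarith [this.2]
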